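/- Let G be a topological gyrogroup and N a compact normal subgyrogroup with x ⊕ N = N ⊕ x for all x. If G is homogeneous and first-countable Hausdorff, then the quotient G/N being first-countable implies G/N is metrizable; moreover, if G is additionally separable then G/N has a countable base. -/

import Mathlib

universe u

class Gyrogroup (G : Type u) where
  add : G → G → G
  zero : G
  neg : G → G
  gyr : G → G → G → G
  zero_add : ∀ x, add zero x = x
  add_zero : ∀ x, add x zero = x
  neg_add : ∀ x, add (neg x) x = zero
  add_neg : ∀ x, add x (neg x) = zero
  gyr_bij : ∀ x y, Function.Bijective (gyr x y)
  gyr_add : ∀ x y a b, gyr x y (add a b) = add (gyr x y a) (gyr x y b)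
  left_assoc : ∀ x y z, add x (add y z) = add (add x y) (gyr x y z)
  loop : ∀ x y, gyr (add x y) y = gyr x y

namespace Gyrogroup

variable {G : Type u}

instance [Gyrogroup G] : Add G := ⟨Gyrogroup.add⟩
instance [Gyrogroup G] : Zero G := ⟨Gyrogroup.zero⟩
instance [Gyrogroup G] : Neg G := ⟨Gyrogroup.neg⟩

/-- The gyrogroup cooperation `x ⊞ y = x ⊕ gyr[x, ⊖y](y)`. -/
def coadd [Gyrogroup G] (x y : G) : G := x + gyr x (-y) y

/-- `S` is a subgyrogroup: contains the identity and is closed under `⊕`, `⊖` and the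
gyroautomorphisms. -/
def IsSubgyro [Gyrogroup G] (S : Set G) : Prop :=
  (0 : G) ∈ S ∧ (∀ ⦃a b : G⦄, a ∈ S → b ∈ S → a + b ∈ S) ∧
    (∀ ⦃a : G⦄, a ∈ S → -a ∈ S) ∧
    ∀ ⦃a b c : G⦄, a ∈ S → b ∈ S → c ∈ S → gyr a b c ∈ S

/-- The subgyrogroup generated by `A`. -/
def gen [Gyrogroup G] (A : Set G) : Set G := ⋂₀ {S : Set G | IsSubgyro S ∧ A ⊆ S}

/-- `N` is a normal subgyrogroup: the kernel of a gyrogroup homomorphism. -/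
def IsNormalSubgyro [Gyrogroup G] (N : Set G) : Prop :=
  ∃ (H : Type u) (i : Gyrogroup H) (f : G → H),
    (∀ a b : G, f (a + b) = i.add (f a) (f b)) ∧ N = f ⁻¹' {i.zero}

/-- A (Hausdorff) topological gyrogroup. -/
class TopGyrogroup (G : Type u) [Gyrogroup G] [TopologicalSpace G] : Prop where
  t2 : T2Space G
  continuous_add : Continuous fun p : G × G => p.1 + p.2
  continuous_neg : Continuous fun x : G => -x

/-- `μ` is a neighborhood base at `0` consisting of gyr-invariant sets. -/
def IsGyroNhdBase [Gyrogroup G] [TopologicalSpace G] (μ : Set (Set G)) : Prop :=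
  (∀ U ∈ μ, U ∈ nhds (0 : G)) ∧ (∀ W ∈ nhds (0 : G), ∃ U ∈ μ, U ⊆ W) ∧
    ∀ U ∈ μ, ∀ x y : G, gyr x y '' U = U

/-- A strongly topological gyrogroup: some neighborhood base at `0` is gyr-invariant. -/
def StronglyTop (G : Type u) [Gyrogroup G] [TopologicalSpace G] : Prop :=
  ∃ μ : Set (Set G), IsGyroNhdBase μ

/-- `S` is a suitable set for `G`. -/
def IsSuitable [Gyrogroup G] [TopologicalSpace G] (S : Set G) : Prop :=
  DiscreteTopology S ∧ IsClosed (S ∪ {(0 : G)}) ∧ Dense (gen S)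

end Gyrogroup

open Gyrogroup
namespace GyroAux
open Gyrogroup
variable {X : Type u} [Gyrogroup X]

lemma zero_add' (x : X) : (0:X) + x = x := Gyrogroup.zero_add x
lemma add_zero' (x : X) : x + (0:X) = x := Gyrogroup.add_zero x
lemma neg_add' (x : X) : -x + x = (0:X) := Gyrogroup.neg_add x
lemma add_neg' (x : X) : x + -x = (0:X) := Gyrogroup.add_neg x
lemma left_assoc' (x y z : X) : x + (y + z) = (x + y) + gyr x y z := Gyrogroup.left_assoc x y z
lemma loop' (x y : X) : gyr (x + y) y = gyr x y := Gyrogroup.loop x y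

lemma add_left_cancel'' {a x y : X} (h : a + x = a + y) : x = y := by
  have h1 : (-a) + (a + x) = (-a) + (a + y) := by rw [h]
  rw [left_assoc', left_assoc', neg_add', zero_add', zero_add'] at h1
  exact (Gyrogroup.gyr_bij (-a) a).injective h1

lemma gyr_zero_left (a z : X) : gyr (0:X) a z = z := by
  have h := left_assoc' (0:X) a z
  rw [zero_add', zero_add'] at h
  exact (add_left_cancel'' h).symm

lemma gyr_neg_self (a z : X) : gyr (-a) a z = z := by
  have h := loop' (-a) a
  rw [neg_add'] at h
  rw [← h]; exact gyr_zero_left a z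

lemma gyr_self_neg (a z : X) : gyr a (-a) z = z := by
  have h := loop' a (-a)
  rw [add_neg'] at h
  rw [← h]; exact gyr_zero_left (-a) z

lemma neg_add_cancel_left (a b : X) : -a + (a + b) = b := by
  rw [left_assoc', neg_add', zero_add']; exact gyr_neg_self a b

lemma add_neg_cancel_left (a b : X) : a + (-a + b) = b := by
  rw [left_assoc', add_neg', zero_add']; exact gyr_self_neg a b

lemma gyr_eq (x y z : X) : gyr x y z = -(x + y) + (x + (y + z)) := by
  rw [left_assoc' x y z, neg_add_cancel_left]

lemma gyr_zero (x y : X) : gyr x y (0:X) = 0 := by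
  rw [gyr_eq, add_zero', neg_add']

lemma neg_zero' : -(0:X) = 0 := by
  have h := neg_add' (0:X); rwa [add_zero'] at h

lemma neg_neg' (a : X) : -(-a) = a :=
  add_left_cancel'' (show -a + -(-a) = -a + a by rw [add_neg', neg_add'])

lemma eq_neg_of_add_eq_zero {a b : X} (h : a + b = 0) : b = -a :=
  add_left_cancel'' (by rw [h, add_neg'])

lemma sigma_recover (z c : X) : (z + c) + gyr (z + c) c (-c) = z := by
  rw [loop', ← left_assoc', add_neg', add_zero']

lemma solve_right {z c w : X} (h : z + c = w) : z = w + gyr w c (-c) := by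
  rw [← h]; exact (sigma_recover z c).symm

lemma inv1 (a b z : X) : gyr (-a) (a + b) (gyr a b z) = z := by
  apply add_left_cancel'' (a := b)
  calc b + gyr (-a) (a+b) (gyr a b z)
      = (-a + (a+b)) + gyr (-a) (a+b) (gyr a b z) := by rw [neg_add_cancel_left]
    _ = -a + ((a+b) + gyr a b z) := (left_assoc' (-a) (a+b) (gyr a b z)).symm
    _ = -a + (a + (b + z)) := by rw [← left_assoc' a b z]
    _ = b + z := by rw [neg_add_cancel_left]

lemma rc (y b : X) : (y + gyr y b (-b)) + b = y := by
  obtain ⟨c, hcdef⟩ : ∃ c, c = gyr y b (-b) := ⟨_, rfl⟩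
  rw [← hcdef]
  have hc : c = -(y + b) + y := by
    rw [hcdef, gyr_eq, add_neg', add_zero']
  have huc : (y + b) + c = y := by
    rw [hc]; exact add_neg_cancel_left (y+b) y
  have hgyc : gyr y c = gyr (y + b) c := by
    conv_lhs => rw [← huc]
    exact loop' (y + b) c
  have hkey : gyr (-(y+b)) y b = -c := by
    rw [gyr_eq, ← hc, neg_add', add_zero']
  have hinv := inv1 (-(y+b)) y b
  rw [neg_neg', ← hc, hkey] at hinv
  calc (y + c) + b
      = (y + c) + gyr (y+b) c (-c) := by rw [hinv]
    _ = (y + c) + gyr y c (-c) := by rw [← hgyc]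
    _ = y + (c + -c) := (left_assoc' y _ _).symm
    _ = y := by rw [add_neg', add_zero']

end GyroAux
set_option linter.unusedSectionVars false

namespace GyroAux
open Filter Topology Set Gyrogroup
variable {X : Type u} [Gyrogroup X] [TopologicalSpace X]

def ball (U : ℕ → Set X) (j : ℕ) (x : X) : Set X := {w | -x + w ∈ U j}

lemma mem_ball {U : ℕ → Set X} {j : ℕ} {x w : X} : w ∈ ball U j x ↔ -x + w ∈ U j := Iff.rfl

lemma self_mem_ball {U : ℕ → Set X} {j : ℕ} (h0 : (0:X) ∈ U j) (x : X) : x ∈ ball U j x := by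
  rw [mem_ball, neg_add']; exact h0

lemma ball_mono {U : ℕ → Set X} (hU : Antitone U) {j j' : ℕ} (h : j ≤ j') (x : X) :
    ball U j' x ⊆ ball U j x := fun _ hw => hU h hw

section cont
variable (hadd : Continuous fun p : X × X => p.1 + p.2) (hneg : Continuous fun x : X => -x)
include hadd hneg

set_option linter.unusedSectionVars false

lemma cont_add2 {Y : Type*} [TopologicalSpace Y] {f g : Y → X} (hf : Continuous f)
    (hg : Continuous g) : Continuous fun y => f y + g y := hadd.comp (hf.prodMk hg)

lemma cont_neg2 {Y : Type*} [TopologicalSpace Y] {f : Y → X} (hf : Continuous f) :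
    Continuous fun y => -(f y) := hneg.comp hf

lemma cont_gyr {Y : Type*} [TopologicalSpace Y] {f g h : Y → X} (hf : Continuous f)
    (hg : Continuous g) (hh : Continuous h) :
    Continuous fun y => gyr (f y) (g y) (h y) := by
  have he : (fun y => gyr (f y) (g y) (h y))
      = fun y => -(f y + g y) + (f y + (g y + h y)) := by
    funext y; rw [gyr_eq]
  rw [he]
  exact cont_add2 hadd hneg (cont_neg2 hadd hneg (cont_add2 hadd hneg hf hg))
    (cont_add2 hadd hneg hf (cont_add2 hadd hneg hg hh))

lemma ball_isOpen {U : ℕ → Set X} (hUo : ∀ j, IsOpen (U j)) (j : ℕ) (x : X) :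
    IsOpen (ball U j x) :=
  (hUo j).preimage (cont_add2 hadd hneg continuous_const continuous_id)

lemma tend_add {α : Type*} {l : Filter α} {c w : α → X} {x : X}
    (hw : Tendsto w l (𝓝 x)) (hc : Tendsto c l (𝓝 0)) :
    Tendsto (fun a => w a + c a) l (𝓝 x) := by
  have h1 : Tendsto (fun a => (w a, c a)) l (𝓝 (x, (0:X))) := hw.prodMk_nhds hc
  have h2 : Tendsto (fun a => w a + c a) l (𝓝 (x + (0:X))) := (hadd.tendsto _).comp h1
  rwa [add_zero'] at h2

lemma tend_psi {α : Type*} {l : Filter α} {c w : α → X} {x : X}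
    (hc : Tendsto c l (𝓝 0)) (hw : Tendsto w l (𝓝 x)) :
    Tendsto (fun a => w a + gyr (w a) (c a) (-(c a))) l (𝓝 x) := by
  have hΨc : Continuous (fun p : X × X => p.2 + gyr p.2 p.1 (-p.1)) :=
    cont_add2 hadd hneg continuous_snd
      (cont_gyr hadd hneg continuous_snd continuous_fst (cont_neg2 hadd hneg continuous_fst))
  have h1 : Tendsto (fun a => (c a, w a)) l (𝓝 ((0:X), x)) := hc.prodMk_nhds hw
  have h2 : Tendsto (fun a => w a + gyr (w a) (c a) (-(c a)))
      l (𝓝 (x + gyr x (0:X) (-(0:X)))) := (hΨc.tendsto _).comp h1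
  rwa [neg_zero', gyr_zero, add_zero'] at h2

lemma exists_base [FirstCountableTopology X] :
    ∃ U : ℕ → Set X, (∀ j, IsOpen (U j)) ∧ (∀ j, (0:X) ∈ U j) ∧ Antitone U ∧
      ∀ s ∈ 𝓝 (0:X), ∃ j, U j ⊆ s := by
  obtain ⟨s, hs⟩ := (𝓝 (0:X)).exists_antitone_basis
  refine ⟨fun j => interior (s j), fun _ => isOpen_interior, fun j => ?_,
    fun j j' h => interior_mono (hs.antitone h), fun t ht => ?_⟩
  · rw [mem_interior_iff_mem_nhds]; exact hs.1.mem_of_mem trivial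
  · obtain ⟨j, -, hj⟩ := hs.1.mem_iff.mp ht
    exact ⟨j, interior_subset.trans hj⟩

lemma chain_frink {U : ℕ → Set X} (hUo : ∀ j, IsOpen (U j)) (hU0 : ∀ j, (0:X) ∈ U j)
    (hUa : Antitone U) (hUb : ∀ s ∈ 𝓝 (0:X), ∃ j, U j ⊆ s) (x : X) (n : ℕ) :
    ∃ m, ∀ j₁ j₂ (y z : X), m ≤ j₁ → m ≤ j₂ →
      (ball U j₂ z ∩ ball U j₁ y).Nonempty → (ball U j₁ y ∩ ball U m x).Nonempty →
      ball U j₂ z ∪ ball U j₁ y ⊆ ball U n x := by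
  by_contra hcon
  push_neg at hcon
  choose j₁ j₂ y z hj₁ hj₂ hne1 hne2 hns using hcon
  choose q1 hq1 using hne1
  choose q2 hq2 using hne2
  choose p hpmem hpnot using fun m => Set.not_subset.mp (hns m)
  have tend0 : ∀ s : ℕ → X, (∀ m, s m ∈ U m) → Tendsto s atTop (𝓝 (0:X)) := by
    intro s hsm
    rw [Filter.tendsto_def]
    intro W hW
    obtain ⟨j, hj⟩ := hUb W hW
    exact Filter.mem_of_superset (Filter.mem_atTop j) fun m hm => hj (hUa hm (hsm m))
  have hq2t : Tendsto q2 atTop (𝓝 x) := by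
    have h1 := tend_add hadd hneg (l := atTop) (w := fun _ => x)
      (c := fun m => -x + q2 m) tendsto_const_nhds (tend0 _ fun m => (hq2 m).2)
    exact h1.congr fun m => add_neg_cancel_left x (q2 m)
  have hyt : Tendsto y atTop (𝓝 x) := by
    have h1 := tend_psi hadd hneg (c := fun m => -(y m) + q2 m) (w := q2)
      (tend0 _ fun m => hUa (hj₁ m) (hq2 m).1) hq2t
    exact h1.congr fun m => (solve_right (add_neg_cancel_left (y m) (q2 m))).symm
  have hq1t : Tendsto q1 atTop (𝓝 x) := by
    have h1 := tend_add hadd hneg (w := y) (c := fun m => -(y m) + q1 m)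
      hyt (tend0 _ fun m => hUa (hj₁ m) (hq1 m).2)
    exact h1.congr fun m => add_neg_cancel_left (y m) (q1 m)
  have hzt : Tendsto z atTop (𝓝 x) := by
    have h1 := tend_psi hadd hneg (c := fun m => -(z m) + q1 m) (w := q1)
      (tend0 _ fun m => hUa (hj₂ m) (hq1 m).1) hq1t
    exact h1.congr fun m => (solve_right (add_neg_cancel_left (z m) (q1 m))).symm
  have hballnx : ball U n x ∈ 𝓝 x :=
    (ball_isOpen hadd hneg hUo n x).mem_nhds (self_mem_ball (hU0 n) x)
  have hA : (fun p : X × X => p.1 + p.2) ⁻¹' (ball U n x) ∈ 𝓝 ((x, (0:X))) := by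
    have h1 : Tendsto (fun p : X × X => p.1 + p.2) (𝓝 ((x, (0:X)))) (𝓝 (x + (0:X))) :=
      hadd.tendsto _
    rw [add_zero'] at h1
    exact h1 hballnx
  rw [mem_nhds_prod_iff] at hA
  obtain ⟨V, hV, W, hW, hVW⟩ := hA
  obtain ⟨K, hK⟩ := hUb W hW
  have hev : ∀ᶠ m in atTop, y m ∈ V ∧ z m ∈ V ∧ K ≤ m := by
    filter_upwards [hyt hV, hzt hV, Filter.eventually_ge_atTop K] with m h1 h2 h3
    exact ⟨h1, h2, h3⟩
  obtain ⟨m, hm1, hm2, hm3⟩ := hev.exists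
  rcases hpmem m with hp | hp
  · have he : -(z m) + p m ∈ W := hK (hUa (le_trans hm3 (hj₂ m)) hp)
    have h2 : z m + (-(z m) + p m) ∈ ball U n x := hVW (Set.mk_mem_prod hm2 he)
    rw [add_neg_cancel_left] at h2
    exact hpnot m h2
  · have he : -(y m) + p m ∈ W := hK (hUa (le_trans hm3 (hj₁ m)) hp)
    have h2 : y m + (-(y m) + p m) ∈ ball U n x := hVW (Set.mk_mem_prod hm1 he)
    rw [add_neg_cancel_left] at h2
    exact hpnot m h2

end cont
end GyroAux
namespace GyroAux
open Filter Topology Set Gyrogroup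
open scoped Uniformity

theorem metrizable_of_gyro {X : Type u} [Gyrogroup X] [TopologicalSpace X]
    (hadd : Continuous fun p : X × X => p.1 + p.2) (hneg : Continuous fun x : X => -x)
    (ht2 : T2Space X) [FirstCountableTopology X] :
    TopologicalSpace.MetrizableSpace X := by
  obtain ⟨U, hUo, hU0, hUa, hUb⟩ := exists_base hadd hneg
  choose M hM using fun (x : X) (n : ℕ) => chain_frink hadd hneg hUo hU0 hUa hUb x n
  let g : ℕ → X → ℕ := fun k x =>
    Nat.rec (motive := fun _ => ℕ) (M x 0) (fun k' gk => max (M x gk) (max (gk + 1) (k'+1))) k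
  have hgs : ∀ k x, g (k+1) x = max (M x (g k x)) (max (g k x + 1) (k+1)) := fun k x => rfl
  have hgk : ∀ k x, k ≤ g k x := by
    intro k x
    cases k with
    | zero => exact Nat.zero_le _
    | succ k => rw [hgs]; exact le_max_of_le_right (le_max_right _ _)
  have hgmono : ∀ k x, g k x ≤ g (k+1) x := by
    intro k x; rw [hgs]; exact le_max_of_le_right (le_max_of_le_left (Nat.le_succ _))
  have hgM : ∀ k x, M x (g k x) ≤ g (k+1) x := by
    intro k x; rw [hgs]; exact le_max_left _ _
  let E : ℕ → Set (X × X) := fun k => ⋃ y : X, (ball U (g k y) y) ×ˢ (ball U (g k y) y)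
  have hEanti : Antitone E := by
    refine antitone_nat_of_succ_le fun k => ?_
    rintro ⟨a, c⟩ hac
    rw [Set.mem_iUnion] at hac ⊢
    obtain ⟨w, hw⟩ := hac
    exact ⟨w, Set.mk_mem_prod (ball_mono hUa (hgmono k w) w hw.1)
      (ball_mono hUa (hgmono k w) w hw.2)⟩
  let 𝓤c : Filter (X × X) := ⨅ k, 𝓟 (E k)
  have hB : 𝓤c.HasBasis (fun _ : ℕ => True) E :=
    Filter.hasBasis_iInf_principal hEanti.directed_ge
  have hEmem : ∀ k, E k ∈ 𝓤c := fun k => hB.mem_of_mem trivial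
  have hcomp : ∀ k, SetRel.comp (E (k+1)) (E (k+1)) ⊆ E k := by
    intro k
    rintro ⟨a, c⟩ ⟨b, hab, hbc⟩
    rw [Set.mem_iUnion] at hab hbc
    obtain ⟨y, hy⟩ := hab
    obtain ⟨z, hz⟩ := hbc
    rw [Set.mem_iUnion]
    rcases le_total (g (k+1) y) (g (k+1) z) with hle | hle
    · have habs := hM y (g k y) (g (k+1) y) (g (k+1) z) y z (hgM k y)
        (le_trans (hgM k y) hle) ⟨b, hz.1, hy.2⟩
        ⟨y, self_mem_ball (hU0 _) y, self_mem_ball (hU0 _) y⟩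
      exact ⟨y, Set.mk_mem_prod (habs (Or.inr hy.1)) (habs (Or.inl hz.2))⟩
    · have habs := hM z (g k z) (g (k+1) z) (g (k+1) y) z y (hgM k z)
        (le_trans (hgM k z) hle) ⟨b, hy.2, hz.1⟩
        ⟨z, self_mem_ball (hU0 _) z, self_mem_ball (hU0 _) z⟩
      exact ⟨z, Set.mk_mem_prod (habs (Or.inl hy.1)) (habs (Or.inr hz.2))⟩
  have hballnhds : ∀ (x : X) (j : ℕ), ball U j x ∈ 𝓝 x := fun x j =>
    (ball_isOpen hadd hneg hUo j x).mem_nhds (self_mem_ball (hU0 j) x)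
  have hnhdsball : ∀ (x : X), ∀ s ∈ 𝓝 x, ∃ j, ball U j x ⊆ s := by
    intro x s hs
    have hcx : Continuous fun w : X => x + w := cont_add2 hadd hneg continuous_const continuous_id
    have ht : Tendsto (fun w : X => x + w) (𝓝 0) (𝓝 (x + 0)) := hcx.tendsto _
    rw [add_zero'] at ht
    obtain ⟨j, hj⟩ := hUb _ (ht hs)
    refine ⟨j, fun w hw => ?_⟩
    have h2 : x + (-x + w) ∈ s := hj hw
    rwa [add_neg_cancel_left] at h2
  have hsec : ∀ (x : X) (j : ℕ), Prod.mk x ⁻¹' (E (M x j)) ⊆ ball U j x := by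
    intro x j w hw
    rw [Set.mem_preimage, Set.mem_iUnion] at hw
    obtain ⟨y, hy⟩ := hw
    have hk := hgk (M x j) y
    have habs := hM x j (g (M x j) y) (g (M x j) y) y y hk hk
      ⟨x, hy.1, hy.1⟩ ⟨x, hy.1, self_mem_ball (hU0 _) x⟩
    exact habs (Or.inl hy.2)
  have hnhds : ∀ x : X, 𝓝 x = Filter.comap (Prod.mk x) 𝓤c := by
    intro x
    refine le_antisymm ?_ ?_
    · rw [(hB.comap (Prod.mk x)).ge_iff]
      intro k _
      refine Filter.mem_of_superset (hballnhds x (g k x)) fun w hw => ?_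
      rw [Set.mem_preimage, Set.mem_iUnion]
      exact ⟨x, Set.mk_mem_prod (self_mem_ball (hU0 _) x) hw⟩
    · rw [Filter.le_def]
      intro s hs
      obtain ⟨j, hj⟩ := hnhdsball x s hs
      exact Filter.mem_comap.mpr ⟨E (M x j), hEmem _, (hsec x j).trans hj⟩
  let u : UniformSpace X :=
    { toTopologicalSpace := ‹TopologicalSpace X›
      uniformity := 𝓤c
      symm := by
        rw [hB.tendsto_right_iff]
        intro k _
        filter_upwards [hEmem k] with p hp
        rw [Set.mem_iUnion] at hp ⊢
        obtain ⟨y, hy⟩ := hp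
        exact ⟨y, Set.mk_mem_prod hy.2 hy.1⟩
      comp := by
        refine le_iInf fun k => ?_
        rw [Filter.le_principal_iff]
        exact Filter.mem_of_superset (Filter.mem_lift' (hEmem (k+1))) (hcomp k)
      nhds_eq_comap_uniformity := hnhds }
  haveI : T0Space X := by haveI := ht2; infer_instance
  letI := u
  haveI hcg : Filter.IsCountablyGenerated (𝓤 X) := hB.isCountablyGenerated
  exact UniformSpace.metrizableSpace

end GyroAux
namespace GyroAux
open Filter Topology Set Gyrogroup

theorem secondCountable_of_gyro {X : Type u} [Gyrogroup X] [TopologicalSpace X]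
    (hadd : Continuous fun p : X × X => p.1 + p.2) (hneg : Continuous fun x : X => -x)
    [FirstCountableTopology X] (hsep : TopologicalSpace.SeparableSpace X) :
    SecondCountableTopology X := by
  obtain ⟨U, hUo, hU0, hUa, hUb⟩ := exists_base hadd hneg
  choose M hM using fun (x : X) (n : ℕ) => chain_frink hadd hneg hUo hU0 hUa hUb x n
  obtain ⟨D, hDc, hDd⟩ := hsep.exists_countable_dense
  have hnhdsball : ∀ (x : X), ∀ s ∈ 𝓝 x, ∃ j, ball U j x ⊆ s := by
    intro x s hs
    have hcx : Continuous fun w : X => x + w := cont_add2 hadd hneg continuous_const continuous_id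
    have ht : Tendsto (fun w : X => x + w) (𝓝 0) (𝓝 (x + 0)) := hcx.tendsto _
    rw [add_zero'] at ht
    obtain ⟨j, hj⟩ := hUb _ (ht hs)
    refine ⟨j, fun w hw => ?_⟩
    have h2 : x + (-x + w) ∈ s := hj hw
    rwa [add_neg_cancel_left] at h2
  refine TopologicalSpace.IsTopologicalBasis.secondCountableTopology
    (b := Set.image2 (fun (d : X) (n : ℕ) => ball U n d) D Set.univ) ?_
    (hDc.image2 Set.countable_univ _)
  apply TopologicalSpace.isTopologicalBasis_of_isOpen_of_nhds
  · rintro t ⟨d, hd, n, -, rfl⟩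
    exact ball_isOpen hadd hneg hUo n d
  · intro x s hx hs
    obtain ⟨j, hj⟩ := hnhdsball x s (hs.mem_nhds hx)
    have hTopen : IsOpen {w : X | -w + x ∈ U (M x j)} :=
      (hUo _).preimage
        (cont_add2 hadd hneg (cont_neg2 hadd hneg continuous_id) continuous_const)
    have hTne : {w : X | -w + x ∈ U (M x j)}.Nonempty :=
      ⟨x, by rw [Set.mem_setOf_eq, neg_add']; exact hU0 _⟩
    obtain ⟨d, hdD, hdT⟩ := hDd.exists_mem_open hTopen hTne
    have hxball : x ∈ ball U (M x j) d := hdT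
    have habs := hM x j (M x j) (M x j) d d le_rfl le_rfl ⟨x, hxball, hxball⟩
      ⟨x, hxball, self_mem_ball (hU0 _) x⟩
    exact ⟨ball U (M x j) d, Set.mem_image2_of_mem hdD (Set.mem_univ _), hxball,
      fun w hw => hj (habs (Or.inl hw))⟩

end GyroAux

open GyroAux in
theorem quotient_metrizable_of_firstCountable {G : Type u} [Gyrogroup G] [TopologicalSpace G]
    [TopGyrogroup G] [FirstCountableTopology G]
    (N : Set G) (hNc : IsCompact N) (hNn : IsNormalSubgyro N)
    (hcomm : ∀ x : G, (x + ·) '' N = (· + x) '' N)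
    (hhomog : ∀ a b : G, ∃ h : G ≃ₜ G, h a = b)
    (Q : Type u) [Gyrogroup Q] [TopologicalSpace Q] (π : G → Q)
    (hhom : ∀ a b : G, π (a + b) = π a + π b) (hsurj : Function.Surjective π)
    (hquot : Topology.IsQuotientMap π) (hker : π ⁻¹' {(0 : Q)} = N) :
    (FirstCountableTopology Q → TopologicalSpace.MetrizableSpace Q) ∧
      (TopologicalSpace.SeparableSpace G → FirstCountableTopology Q →
        SecondCountableTopology Q) := by
  haveI hT2G : T2Space G := TopGyrogroup.t2
  have haddG : Continuous fun p : G × G => p.1 + p.2 := TopGyrogroup.continuous_add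
  have hnegG : Continuous fun x : G => -x := TopGyrogroup.continuous_neg
  have hπ0 : π (0 : G) = 0 := by
    have h : π ((0:G) + 0) = π 0 + π 0 := hhom 0 0
    rw [GyroAux.add_zero'] at h
    have h2 : π (0:G) + (0:Q) = π 0 + π 0 := by rw [GyroAux.add_zero']; exact h
    exact (GyroAux.add_left_cancel'' h2).symm
  have hπneg : ∀ x : G, π (-x) = -(π x) := by
    intro x
    have h : π (-x) + π x = 0 := by rw [← hhom, GyroAux.neg_add', hπ0]
    have h2 := GyroAux.eq_neg_of_add_eq_zero h
    rw [h2, GyroAux.neg_neg']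
  have hfib : ∀ u w : G, π w = π u ↔ -u + w ∈ N := by
    intro u w
    rw [← hker]
    simp only [Set.mem_preimage, Set.mem_singleton_iff]
    rw [hhom, hπneg]
    constructor
    · intro h; rw [h, GyroAux.neg_add']
    · intro h
      have h2 : -(π u) + π w = -(π u) + π u := by rw [GyroAux.neg_add']; exact h
      exact GyroAux.add_left_cancel'' h2
  have hσcont : ∀ b : G, Continuous fun w : G => w + gyr w b (-b) := fun b =>
    cont_add2 haddG hnegG continuous_id
      (cont_gyr haddG hnegG continuous_id continuous_const continuous_const)
  have hρopen : ∀ b : G, IsOpenMap fun w : G => w + b := by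
    intro b O hO
    have himg : (fun w : G => w + b) '' O = (fun w : G => w + gyr w b (-b)) ⁻¹' O := by
      ext w
      constructor
      · rintro ⟨o, ho, rfl⟩
        rw [Set.mem_preimage, GyroAux.sigma_recover]
        exact ho
      · intro hw
        exact ⟨w + gyr w b (-b), hw, GyroAux.rc w b⟩
    rw [himg]
    exact hO.preimage (hσcont b)
  have hπopen : IsOpenMap π := by
    intro O hO
    rw [← hquot.isOpen_preimage]
    have hsat : π ⁻¹' (π '' O) = ⋃ nn ∈ N, (fun w : G => w + nn) '' O := by
      ext w
      rw [Set.mem_preimage, Set.mem_iUnion₂]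
      constructor
      · rintro ⟨o, ho, heq⟩
        exact ⟨-o + w, (hfib o w).mp heq.symm, o, ho, GyroAux.add_neg_cancel_left o w⟩
      · rintro ⟨nn, hnn, o, ho, rfl⟩
        have how : π (o + nn) = π o := by
          rw [hfib o (o + nn), GyroAux.neg_add_cancel_left]
          exact hnn
        exact ⟨o, ho, how.symm⟩
    rw [hsat]
    exact isOpen_biUnion fun nn _ => hρopen nn O hO
  have hππ : Topology.IsQuotientMap (Prod.map π π) :=
    IsOpenMap.isQuotientMap (hπopen.prodMap hπopen)
      (hquot.continuous.prodMap hquot.continuous) (hsurj.prodMap hsurj)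
  have haddQ : Continuous fun p : Q × Q => p.1 + p.2 := by
    apply hππ.continuous_iff.mpr
    have he : ((fun p : Q × Q => p.1 + p.2) ∘ Prod.map π π)
        = fun p : G × G => π (p.1 + p.2) := by
      funext p
      simp only [Function.comp_apply, Prod.map_apply]
      exact (hhom p.1 p.2).symm
    rw [he]
    exact hquot.continuous.comp haddG
  have hnegQ : Continuous fun q : Q => -q := by
    apply hquot.continuous_iff.mpr
    have he : ((fun q : Q => -q) ∘ π) = fun g' : G => π (-g') := by
      funext g'
      simp only [Function.comp_apply]
      exact (hπneg g').symm
    rw [he]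
    exact hquot.continuous.comp hnegG
  have hNcl : IsClosed N := hNc.isClosed
  have hRcl : IsClosed {p : G × G | -p.1 + p.2 ∈ N} :=
    IsClosed.preimage
      (cont_add2 haddG hnegG (cont_neg2 haddG hnegG continuous_fst) continuous_snd) hNcl
  have hT2Q : T2Space Q := by
    constructor
    intro a b hab
    obtain ⟨x, rfl⟩ := hsurj a
    obtain ⟨y, rfl⟩ := hsurj b
    have hxy : (x, y) ∈ {p : G × G | -p.1 + p.2 ∈ N}ᶜ := by
      intro hmem
      exact hab ((hfib x y).mpr hmem).symm
    obtain ⟨u, v, hu, hv, hxu, hyv, huv⟩ :=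
      isOpen_prod_iff.mp hRcl.isOpen_compl x y hxy
    refine ⟨π '' u, π '' v, hπopen u hu, hπopen v hv, ⟨x, hxu, rfl⟩, ⟨y, hyv, rfl⟩, ?_⟩
    rw [Set.disjoint_left]
    rintro q ⟨g1, hg1, hq1⟩ ⟨g2, hg2, hq2⟩
    have heq : π g2 = π g1 := by rw [hq1, hq2]
    exact (huv (Set.mk_mem_prod hg1 hg2)) ((hfib g1 g2).mp heq)
  constructor
  · intro hfcQ
    haveI := hfcQ
    exact metrizable_of_gyro haddQ hnegQ hT2Q
  · intro hsepG hfcQ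
    haveI := hfcQ
    obtain ⟨s, hsc, hsd⟩ := hsepG.exists_countable_dense
    have hsepQ : TopologicalSpace.SeparableSpace Q :=
      ⟨⟨π '' s, hsc.image π, (hsurj.denseRange).dense_image hquot.continuous hsd⟩⟩
    exact secondCountable_of_gyro haddQ hnegQ hsepQ
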